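/- Let X be a Polish space and (Q, F_Q, 𝕄) an atomless standard Borel probability space. Then the set 𝒳^IR := { (Z,U) ∈ L⁰(Q,𝕄; X × Q) : Z and U are independent random variables and U_♯𝕄 = 𝕄 } is closed in L⁰(Q,𝕄; X × Q) with respect to the topology of convergence in probability. -/

import Mathlib

open MeasureTheory Topology ENNReal Set Filter

noncomputable section

namespace OTRM

/-- Lemma 4.4: let `X` be a Polish (metric) space and `(Q, F_Q, 𝕄)` an
atomless standard Borel probability space (here realized as a Polish metric space with its
Borel σ-algebra and an atomless Borel probability measure). The set
`𝒳^IR = {(Z,U) ∈ L⁰(Q,𝕄;X×Q) : Z ⫫ U, U_♯𝕄 = 𝕄}` is closed with respect to the topology of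
convergence in probability; since that topology is metrizable, this is expressed by
sequential closedness for convergence in measure. -/
private lemma bcnn_apply_le_ennreal {α : Type*} [TopologicalSpace α]
    (f : BoundedContinuousFunction α NNReal) (x : α) :
    (f x : ℝ≥0∞) ≤ (nndist f 0 : ℝ≥0∞) := by
  have h1 : f x ≤ nndist f 0 := by
    calc f x ≤ 0 + nndist (f x) 0 := NNReal.le_add_nndist (f x) 0
      _ = nndist (f x) ((0 : BoundedContinuousFunction α NNReal) x) := by simp
      _ ≤ nndist f 0 := BoundedContinuousFunction.nndist_coe_le_nndist x
  exact_mod_cast h1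

theorem isClosed_independentRandomization
    {X : Type*} [MetricSpace X] [PolishSpace X] [MeasurableSpace X] [BorelSpace X]
    {Q : Type*} [MetricSpace Q] [PolishSpace Q] [MeasurableSpace Q] [BorelSpace Q]
    (𝕄 : Measure Q) [IsProbabilityMeasure 𝕄] [NullSingletonClass 𝕄]
    (Z : ℕ → Q → X) (U : ℕ → Q → Q)
    (hZ : ∀ n, Measurable (Z n)) (hU : ∀ n, Measurable (U n))
    (hind : ∀ n, ProbabilityTheory.IndepFun (Z n) (U n) 𝕄)
    (hlaw : ∀ n, Measure.map (U n) 𝕄 = 𝕄)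
    (Zlim : Q → X) (Ulim : Q → Q) (hZlim : Measurable Zlim) (hUlim : Measurable Ulim)
    (htendsto : TendstoInMeasure 𝕄 (fun n q => (Z n q, U n q)) atTop
      (fun q => (Zlim q, Ulim q))) :
    ProbabilityTheory.IndepFun Zlim Ulim 𝕄 ∧ Measure.map Ulim 𝕄 = 𝕄 := by
  obtain ⟨ns, hns_mono, hae⟩ := htendsto.exists_seq_tendsto_ae
  have haeZ : ∀ᵐ q ∂𝕄, Tendsto (fun k => Z (ns k) q) atTop (𝓝 (Zlim q)) :=
    hae.mono fun q h => (continuous_fst.tendsto _).comp h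
  have haeU : ∀ᵐ q ∂𝕄, Tendsto (fun k => U (ns k) q) atTop (𝓝 (Ulim q)) :=
    hae.mono fun q h => (continuous_snd.tendsto _).comp h
  -- Second part : the law of `Ulim` is `𝕄`.
  have hlawU : Measure.map Ulim 𝕄 = 𝕄 := by
    refine ext_of_forall_lintegral_eq_of_IsFiniteMeasure fun f => ?_
    rw [lintegral_map (f.continuous.measurable.coe_nnreal_ennreal) hUlim]
    have h1 : Tendsto (fun k => ∫⁻ q, (f (U (ns k) q) : ℝ≥0∞) ∂𝕄) atTop
        (𝓝 (∫⁻ q, (f (Ulim q) : ℝ≥0∞) ∂𝕄)) := by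
      refine tendsto_lintegral_of_dominated_convergence (fun _ => (nndist f 0 : ℝ≥0∞))
        (fun k => (f.continuous.measurable.comp (hU (ns k))).coe_nnreal_ennreal)
        (fun k => Eventually.of_forall fun q => ?_) ?_
        (haeU.mono fun q h => ?_)
      · exact bcnn_apply_le_ennreal f (U (ns k) q)
      · rw [lintegral_const]; exact ENNReal.mul_ne_top ENNReal.coe_ne_top (measure_ne_top _ _)
      · exact (ENNReal.continuous_coe.tendsto _).comp ((f.continuous.tendsto _).comp h)
    have h2 : ∀ n, ∫⁻ q, (f (U n q) : ℝ≥0∞) ∂𝕄 = ∫⁻ q, (f q : ℝ≥0∞) ∂𝕄 := by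
      intro n
      rw [← lintegral_map f.continuous.measurable.coe_nnreal_ennreal (hU n),
        hlaw n]
    simp only [h2] at h1
    exact tendsto_nhds_unique h1 tendsto_const_nhds
  refine ⟨?_, hlawU⟩
  -- First part : independence.
  rw [ProbabilityTheory.indepFun_iff_map_prod_eq_prod_map_map hZlim.aemeasurable
    hUlim.aemeasurable, hlawU]
  haveI : ∀ n, IsProbabilityMeasure (Measure.map (Z n) 𝕄) :=
    fun n => Measure.isProbabilityMeasure_map (hZ n).aemeasurable
  haveI : IsProbabilityMeasure (Measure.map Zlim 𝕄) :=
    Measure.isProbabilityMeasure_map hZlim.aemeasurable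
  refine ext_of_forall_lintegral_eq_of_IsFiniteMeasure fun f => ?_
  have hfm : Measurable fun p : X × Q => (f p : ℝ≥0∞) :=
    f.continuous.measurable.coe_nnreal_ennreal
  set g : X → ℝ≥0∞ := fun x => ∫⁻ y, (f (x, y) : ℝ≥0∞) ∂𝕄 with hg_def
  have hg_meas : Measurable g := by
    apply Measurable.lintegral_prod_right (f := fun x y => (f (x, y) : ℝ≥0∞))
    exact hfm
  have hg_le : ∀ x, g x ≤ (nndist f 0 : ℝ≥0∞) := by
    intro x
    calc g x ≤ ∫⁻ _, (nndist f 0 : ℝ≥0∞) ∂𝕄 :=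
          lintegral_mono fun y => by exact bcnn_apply_le_ennreal f (x, y)
      _ = (nndist f 0 : ℝ≥0∞) := by simp
  have hg_tendsto : ∀ {x : ℕ → X} {x0 : X}, Tendsto x atTop (𝓝 x0) →
      Tendsto (fun k => g (x k)) atTop (𝓝 (g x0)) := by
    intro x x0 hx
    refine tendsto_lintegral_of_dominated_convergence (fun _ => (nndist f 0 : ℝ≥0∞))
      (fun k => hfm.comp (measurable_const.prodMk measurable_id))
      (fun k => Eventually.of_forall fun y => ?_) ?_
      (Eventually.of_forall fun y => ?_)
    · exact bcnn_apply_le_ennreal f (x k, y)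
    · rw [lintegral_const]; exact ENNReal.mul_ne_top ENNReal.coe_ne_top (measure_ne_top _ _)
    · exact (ENNReal.continuous_coe.tendsto _).comp
        ((f.continuous.tendsto _).comp ((hx.prodMk_nhds tendsto_const_nhds)))
  -- value of the integral for each `n`, using independence
  have key : ∀ n, ∫⁻ q, (f (Z n q, U n q) : ℝ≥0∞) ∂𝕄 = ∫⁻ q, g (Z n q) ∂𝕄 := by
    intro n
    have hmap : Measure.map (fun q => (Z n q, U n q)) 𝕄
        = (Measure.map (Z n) 𝕄).prod (Measure.map (U n) 𝕄) :=
      (ProbabilityTheory.indepFun_iff_map_prod_eq_prod_map_map (hZ n).aemeasurable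
        (hU n).aemeasurable).1 (hind n)
    calc ∫⁻ q, (f (Z n q, U n q) : ℝ≥0∞) ∂𝕄
        = ∫⁻ p, (f p : ℝ≥0∞) ∂(Measure.map (fun q => (Z n q, U n q)) 𝕄) :=
          (lintegral_map hfm ((hZ n).prodMk (hU n))).symm
      _ = ∫⁻ p, (f p : ℝ≥0∞) ∂((Measure.map (Z n) 𝕄).prod 𝕄) := by rw [hmap, hlaw n]
      _ = ∫⁻ x, g x ∂(Measure.map (Z n) 𝕄) :=
          MeasureTheory.lintegral_prod _ hfm.aemeasurable
      _ = ∫⁻ q, g (Z n q) ∂𝕄 := lintegral_map hg_meas (hZ n)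
  -- two limits
  have h1 : Tendsto (fun k => ∫⁻ q, (f (Z (ns k) q, U (ns k) q) : ℝ≥0∞) ∂𝕄) atTop
      (𝓝 (∫⁻ q, (f (Zlim q, Ulim q) : ℝ≥0∞) ∂𝕄)) := by
    refine tendsto_lintegral_of_dominated_convergence (fun _ => (nndist f 0 : ℝ≥0∞))
      (fun k => hfm.comp ((hZ (ns k)).prodMk (hU (ns k))))
      (fun k => Eventually.of_forall fun q => ?_) ?_
      (hae.mono fun q h => ?_)
    · exact bcnn_apply_le_ennreal f (Z (ns k) q, U (ns k) q)
    · rw [lintegral_const]; exact ENNReal.mul_ne_top ENNReal.coe_ne_top (measure_ne_top _ _)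
    · exact (ENNReal.continuous_coe.tendsto _).comp ((f.continuous.tendsto _).comp h)
  have h2 : Tendsto (fun k => ∫⁻ q, g (Z (ns k) q) ∂𝕄) atTop
      (𝓝 (∫⁻ q, g (Zlim q) ∂𝕄)) := by
    refine tendsto_lintegral_of_dominated_convergence (fun _ => (nndist f 0 : ℝ≥0∞))
      (fun k => hg_meas.comp (hZ (ns k)))
      (fun k => Eventually.of_forall fun q => hg_le _) ?_
      (haeZ.mono fun q h => hg_tendsto h)
    rw [lintegral_const]
    exact ENNReal.mul_ne_top ENNReal.coe_ne_top (measure_ne_top _ _)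
  simp only [key] at h1
  have heq : ∫⁻ q, (f (Zlim q, Ulim q) : ℝ≥0∞) ∂𝕄 = ∫⁻ q, g (Zlim q) ∂𝕄 :=
    tendsto_nhds_unique h1 h2
  calc ∫⁻ p, (f p : ℝ≥0∞) ∂(Measure.map (fun ω => (Zlim ω, Ulim ω)) 𝕄)
      = ∫⁻ q, (f (Zlim q, Ulim q) : ℝ≥0∞) ∂𝕄 := lintegral_map hfm (hZlim.prodMk hUlim)
    _ = ∫⁻ q, g (Zlim q) ∂𝕄 := heq
    _ = ∫⁻ x, g x ∂(Measure.map Zlim 𝕄) := (lintegral_map hg_meas hZlim).symm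
    _ = ∫⁻ p, (f p : ℝ≥0∞) ∂((Measure.map Zlim 𝕄).prod 𝕄) :=
        (MeasureTheory.lintegral_prod _ hfm.aemeasurable).symm
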